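/- The sum over n ≥ 0 of p·(pq)^n·C_n equals 1, where C_n is the n-th Catalan number, p + q = 1, and 0 < q < 1/2. -/

import Mathlib

open Finset

private lemma catalan_rec (n : ℕ) : (n + 2) * catalan (n + 1) = 2 * (2 * n + 1) * catalan n := by
  have h1 := Nat.succ_mul_centralBinom_succ n
  have h2 := succ_mul_catalan_eq_centralBinom (n + 1)
  have h3 := succ_mul_catalan_eq_centralBinom n
  have key : (n + 1) * ((n + 2) * catalan (n + 1)) = (n + 1) * (2 * (2 * n + 1) * catalan n) := by
    calc (n + 1) * ((n + 2) * catalan (n + 1)) = (n + 1) * Nat.centralBinom (n + 1) := by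
          rw [← h2]
      _ = 2 * (2 * n + 1) * Nat.centralBinom n := h1
      _ = 2 * (2 * n + 1) * ((n + 1) * catalan n) := by rw [h3]
      _ = (n + 1) * (2 * (2 * n + 1) * catalan n) := by ring
  exact Nat.eq_of_mul_eq_mul_left (Nat.succ_pos n) key

private lemma catalan_partial_sum (N : ℕ) :
    ∑ i ∈ range N, (catalan i : ℝ) / 4 ^ i = 2 - 2 * (N + 1) * (catalan N : ℝ) / 4 ^ N := by
  induction N with
  | zero => simp
  | succ n ih =>
    rw [Finset.sum_range_succ, ih]
    have hrec : ((n : ℝ) + 2) * (catalan (n + 1) : ℝ) = 2 * (2 * n + 1) * (catalan n : ℝ) := by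
      exact_mod_cast congrArg (Nat.cast (R := ℝ)) (catalan_rec n)
    have h4 : (4 : ℝ) ^ n ≠ 0 := by positivity
    field_simp [pow_succ]
    ring_nf
    ring_nf at hrec
    push_cast
    linear_combination (2 * (4:ℝ) ^ n) * hrec

theorem selfish_mining_catalan_sum_one (p q : ℝ) (hpq : p + q = 1)
    (hq0 : 0 < q) (hq : q < 1/2) :
    HasSum (fun n : ℕ => p * (p * q) ^ n * (catalan n : ℝ)) 1 := by
  have hp0 : 0 < p := by linarith
  set x : ℝ := p * q with hxdef
  have hx0 : 0 < x := mul_pos hp0 hq0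
  have hx4 : x ≤ 1 / 4 := by nlinarith [sq_nonneg (p - q)]
  have hx4' : 4 * x < 1 := by nlinarith [sq_nonneg (p - q)]
  -- the terms of the Catalan series
  set g : ℕ → ℝ := fun n => (catalan n : ℝ) * x ^ n with hgdef
  have hg_nonneg : ∀ n, 0 ≤ g n := fun n => by positivity
  have hcat_le : ∀ n : ℕ, (catalan n : ℝ) ≤ 4 ^ n := by
    intro n
    have h1 : catalan n ≤ Nat.centralBinom n := by
      have := succ_mul_catalan_eq_centralBinom n
      calc catalan n ≤ (n + 1) * catalan n := Nat.le_mul_of_pos_left _ (Nat.succ_pos n)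
        _ = Nat.centralBinom n := this
    have h2 : Nat.centralBinom n ≤ 4 ^ n := by
      calc Nat.centralBinom n = (2 * n).choose n := rfl
        _ ≤ (2 * n + 1).choose n := Nat.choose_le_choose n (Nat.le_succ _)
        _ ≤ 4 ^ n := Nat.choose_middle_le_pow n
    calc (catalan n : ℝ) ≤ (Nat.centralBinom n : ℝ) := by exact_mod_cast h1
      _ ≤ ((4 ^ n : ℕ) : ℝ) := by exact_mod_cast h2
      _ = 4 ^ n := by push_cast; ring
  have hg_le : ∀ n, g n ≤ (4 * x) ^ n := by
    intro n
    simp only [hgdef]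
    rw [mul_pow 4 x n]
    exact mul_le_mul_of_nonneg_right (hcat_le n) (pow_nonneg hx0.le n)
  have hsum_geo : Summable (fun n : ℕ => (4 * x) ^ n) :=
    summable_geometric_of_lt_one (by positivity) hx4'
  have hg_summable : Summable g :=
    Summable.of_nonneg_of_le hg_nonneg hg_le hsum_geo
  set S : ℝ := ∑' n, g n with hSdef
  have hgS : HasSum g S := hg_summable.hasSum
  -- bound S ≤ 2
  have hS_le : S ≤ 2 := by
    apply Real.tsum_le_of_sum_range_le hg_nonneg
    intro n
    calc ∑ i ∈ range n, g i ≤ ∑ i ∈ range n, (catalan i : ℝ) / 4 ^ i := by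
          apply Finset.sum_le_sum
          intro i _
          have : x ^ i ≤ (1 / 4 : ℝ) ^ i := pow_le_pow_left₀ hx0.le hx4 i
          calc g i = (catalan i : ℝ) * x ^ i := rfl
            _ ≤ (catalan i : ℝ) * (1 / 4) ^ i := by
                apply mul_le_mul_of_nonneg_left this (by positivity)
            _ = (catalan i : ℝ) / 4 ^ i := by rw [div_pow]; ring
      _ = 2 - 2 * (n + 1) * (catalan n : ℝ) / 4 ^ n := catalan_partial_sum n
      _ ≤ 2 := by
          have : 0 ≤ 2 * ((n : ℝ) + 1) * (catalan n : ℝ) / 4 ^ n := by positivity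
          linarith
  -- norm summability
  have hg_norm : Summable fun n => ‖g n‖ := by
    simpa [Real.norm_of_nonneg (hg_nonneg _)] using hg_summable
  -- Cauchy product: S * S = ∑' n, catalan (n+1) * x ^ n
  have hcauchy : S * S = ∑' n : ℕ, (catalan (n + 1) : ℝ) * x ^ n := by
    rw [hSdef, tsum_mul_tsum_eq_tsum_sum_antidiagonal_of_summable_norm hg_norm hg_norm]
    congr 1
    funext n
    calc ∑ kl ∈ Finset.HasAntidiagonal.antidiagonal n, g kl.1 * g kl.2
        = ∑ kl ∈ Finset.HasAntidiagonal.antidiagonal n, ((catalan kl.1 : ℝ) * (catalan kl.2 : ℝ)) * x ^ n := by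
          apply Finset.sum_congr rfl
          intro kl hkl
          have := Finset.HasAntidiagonal.mem_antidiagonal.mp hkl
          calc g kl.1 * g kl.2
              = ((catalan kl.1 : ℝ) * (catalan kl.2 : ℝ)) * (x ^ kl.1 * x ^ kl.2) := by
                simp only [hgdef]; ring
            _ = ((catalan kl.1 : ℝ) * (catalan kl.2 : ℝ)) * x ^ n := by
                rw [← pow_add, this]
      _ = (∑ kl ∈ Finset.HasAntidiagonal.antidiagonal n, (catalan kl.1 : ℝ) * (catalan kl.2 : ℝ)) * x ^ n := by
          rw [← Finset.sum_mul]
      _ = (catalan (n + 1) : ℝ) * x ^ n := by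
          congr 1
          rw [catalan_succ' n]
          push_cast
          rfl
  -- summability of shifted series
  have hshift : HasSum (fun n : ℕ => g (n + 1)) (S - 1) := by
    apply (hasSum_nat_add_iff (f := g) 1).mpr
    have : S - 1 + ∑ i ∈ range 1, g i = S := by
      simp [hgdef]
    rw [this]
    exact hgS
  have hshift_sum : ∑' n : ℕ, (catalan (n + 1) : ℝ) * x ^ (n + 1) = S - 1 := by
    have : (fun n : ℕ => (catalan (n + 1) : ℝ) * x ^ (n + 1)) = fun n => g (n + 1) := rfl
    rw [this, hshift.tsum_eq]
  -- the quadratic equation x * S^2 = S - 1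
  have hquad : x * (S * S) = S - 1 := by
    rw [hcauchy, ← tsum_mul_left]
    rw [← hshift_sum]
    congr 1
    funext n
    ring
  -- factor: (p*S - 1) * (q*S - 1) = 0
  have hfactor : (p * S - 1) * (q * S - 1) = 0 := by
    have : x = p * q := hxdef
    nlinarith [hquad]
  have hqS : q * S - 1 ≠ 0 := by
    have : q * S ≤ q * 2 := mul_le_mul_of_nonneg_left hS_le hq0.le
    have : q * S < 1 := by linarith
    linarith
  have hpS : p * S = 1 := by
    rcases mul_eq_zero.mp hfactor with h | h
    · linarith
    · exact absurd h hqS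
  have := hgS.mul_left p
  rw [hpS] at this
  convert this using 2 with n
  · rfl
  simp only [hgdef]
  ring
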